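/- If the semiring B0 satisfies an identity p ≈ q between polynomials (i.e., p and q take equal values in B0 under every valuation), then c(p) = c(q). -/

import Mathlib

/-- An additively idempotent semiring: `(S,+)` is a semilattice,
`(S,·)` is a semigroup, and multiplication distributes over addition. -/
class AISemiring (S : Type u) extends Add S, Mul S where
  add_comm' : ∀ a b : S, a + b = b + a
  add_assoc' : ∀ a b c : S, a + b + c = a + (b + c)
  add_idem' : ∀ a : S, a + a = a
  mul_assoc' : ∀ a b c : S, a * b * c = a * (b * c)
  left_distrib' : ∀ a b c : S, a * (b + c) = a * b + a * c
  right_distrib' : ∀ a b c : S, (a + b) * c = a * c + b * c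

/-- The term `x₁ y z₁` where the outer factors `x₁`, `z₁` may be absent. -/
def optTerm {S : Type u} [Mul S] : Option S → S → Option S → S
  | none, y, none => y
  | some a, y, none => a * y
  | none, y, some b => y * b
  | some a, y, some b => a * y * b

/-- The system Σ of ai-semiring identities (2.1)–(2.6);
`p ≤ q` abbreviates `p + q ≈ p`. -/
def SatSigma (S : Type u) [AISemiring S] : Prop :=
  (∀ x : S, x * x = x * x * x) ∧
  (∀ x y : S, x * x * (y * y) = y * y * (x * x)) ∧
  (∀ x y : S, x * x * (y * y) = x * y * x) ∧
  (∀ x y : S, x + y * y = x * x * (y * y)) ∧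
  (∀ x y : S, x * y + x = x * (y * y)) ∧
  (∀ x y : S, y * x + x = y * y * x) ∧
  (∀ x y z t : S, (x * y + z * y + z * t) + x * t = x * y + z * y + z * t) ∧
  (∀ (x₁ z₁ x₂ z₂ : Option S) (y : S),
    (optTerm x₁ y z₁ + optTerm x₂ y z₂) + optTerm x₁ y z₂ =
      optTerm x₁ y z₁ + optTerm x₂ y z₂)

/-- A word over `X`: a nonempty finite sequence of letters (head and tail). -/
abbrev Word (X : Type v) : Type v := X × List X

/-- The list of letters of a word. -/
def Word.letters {X : Type v} (w : Word X) : List X := w.1 :: w.2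

/-- Value of a word in an ai-semiring under a valuation. -/
def Word.eval {X : Type v} {S : Type u} [AISemiring S] (val : X → S) (w : Word X) : S :=
  (w.2.map val).foldl (· * ·) (val w.1)

/-- A polynomial over `X`: a finite nonempty collection of words. -/
abbrev SrPoly (X : Type v) : Type v := Word X × List (Word X)

/-- The words (summands) of a polynomial. -/
def SrPoly.words {X : Type v} (p : SrPoly X) : List (Word X) := p.1 :: p.2

/-- Value of a polynomial in an ai-semiring under a valuation:
the sum of the values of its words. -/
def SrPoly.eval {X : Type v} {S : Type u} [AISemiring S] (val : X → S) (p : SrPoly X) : S :=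
  (p.2.map (Word.eval val)).foldl (· + ·) (Word.eval val p.1)

/-- The content `c(p)`: the set of letters occurring in `p`. -/
def SrPoly.content {X : Type v} (p : SrPoly X) : Set X :=
  {x | ∃ w ∈ SrPoly.words p, x ∈ Word.letters w}

/-- A word viewed as a one-word polynomial. -/
def Word.toPoly {X : Type v} (w : Word X) : SrPoly X := (w, [])

/-- `p ≤_Σ q` : in every ai-semiring satisfying Σ, under every valuation,
the value of `p + q` equals the value of `p`. -/
def leSigma.{u, v} {X : Type v} (p q : SrPoly X) : Prop :=
  ∀ (S : Type u) [AISemiring S], SatSigma S → ∀ val : X → S,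
    SrPoly.eval val p + SrPoly.eval val q = SrPoly.eval val p

/-- `p ≈_Σ q` : in every ai-semiring satisfying Σ the values of `p` and `q` coincide. -/
def eqSigma.{u, v} {X : Type v} (p q : SrPoly X) : Prop :=
  ∀ (S : Type u) [AISemiring S], SatSigma S → ∀ val : X → S,
    SrPoly.eval val p = SrPoly.eval val q

/-- `w ≥_Σ p` for a word `w`. -/
def geSigmaWord.{u, v} {X : Type v} (w : Word X) (p : SrPoly X) : Prop :=
  leSigma.{u, v} p (Word.toPoly w)

/-- `x →_p y` : either `x = y` or some word `w ≥_Σ p` has an occurrence of `x`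
preceding an occurrence of `y`. -/
def arrow.{u, v} {X : Type v} (p : SrPoly X) (x y : X) : Prop :=
  x = y ∨ ∃ (w : Word X) (l₁ l₂ l₃ : List X),
    geSigmaWord.{u, v} w p ∧ Word.letters w = l₁ ++ x :: (l₂ ++ y :: l₃)

/-- `x` is rare in `p` : `x ∈ c(p)` and no word `w ≥_Σ p` contains two occurrences
of `x`. -/
def Rare.{u, v} {X : Type v} (p : SrPoly X) (x : X) : Prop :=
  x ∈ SrPoly.content p ∧
    ¬ ∃ (w : Word X) (l₁ l₂ l₃ : List X),
      geSigmaWord.{u, v} w p ∧ Word.letters w = l₁ ++ x :: (l₂ ++ x :: l₃)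

/-- `R(p)` : the set of letters rare in `p`. -/
def rares.{u, v} {X : Type v} (p : SrPoly X) : Set X := {x | Rare.{u, v} p x}

/-- `p` is degenerate if `R(p) = ∅`. -/
def Degenerate.{u, v} {X : Type v} (p : SrPoly X) : Prop := rares.{u, v} p = ∅

/-- `w^(2)` : the letterwise squaring of a word. -/
def Word.sq {X : Type v} (w : Word X) : Word X :=
  (w.1, w.1 :: List.foldr (fun x acc => x :: x :: acc) [] w.2)

/-- The word `w₁ w₂ w₃` where the outer parts `w₁`, `w₃` are (possibly empty) lists. -/
def joinWord {X : Type v} (l₁ : List X) (w : Word X) (l₃ : List X) : Word X :=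
  match l₁ with
  | [] => (w.1, w.2 ++ l₃)
  | a :: t => (a, t ++ Word.letters w ++ l₃)

/-- A chain in the poset `(R(p), →_p|R(p))`. -/
def IsChainIn.{u, v} {X : Type v} (p : SrPoly X) (C : Set X) : Prop :=
  C ⊆ rares.{u, v} p ∧ ∀ x ∈ C, ∀ y ∈ C, arrow.{u, v} p x y ∨ arrow.{u, v} p y x

/-- A maximal chain in the poset `(R(p), →_p|R(p))`. -/
def IsMaxChainIn.{u, v} {X : Type v} (p : SrPoly X) (C : Set X) : Prop :=
  IsChainIn.{u, v} p C ∧ ∀ D : Set X, IsChainIn.{u, v} p D → C ⊆ D → D = C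

/-- An antichain in the poset `(R(p), →_p|R(p))`. -/
def IsAntichainIn.{u, v} {X : Type v} (p : SrPoly X) (A : Set X) : Prop :=
  A ⊆ rares.{u, v} p ∧
    ∀ x ∈ A, ∀ y ∈ A, x ≠ y → ¬ arrow.{u, v} p x y ∧ ¬ arrow.{u, v} p y x

/-- A maximal antichain in the poset `(R(p), →_p|R(p))`. -/
def IsMaxAntichainIn.{u, v} {X : Type v} (p : SrPoly X) (A : Set X) : Prop :=
  IsAntichainIn.{u, v} p A ∧
    ∀ B : Set X, IsAntichainIn.{u, v} p B → A ⊆ B → B = A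

/-- The 4-element semiring `B0 = B₂ \ {e21}`. -/
inductive B0 : Type
  | zero | e11 | e12 | e22
  deriving DecidableEq

instance : Fintype B0 where
  elems := {B0.zero, B0.e11, B0.e12, B0.e22}
  complete := by intro x; cases x <;> simp

/-- Addition in `B0`: `x + y = x` if `x = y` and `0` otherwise. -/
def B0.add : B0 → B0 → B0 := fun a b => if a = b then a else B0.zero

/-- Multiplication in `B0` (matrix units). -/
def B0.mul : B0 → B0 → B0
  | .e11, .e11 => .e11
  | .e22, .e22 => .e22
  | .e11, .e12 => .e12
  | .e12, .e22 => .e12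
  | _, _ => .zero

instance : AISemiring B0 where
  add := B0.add
  mul := B0.mul
  add_comm' := by decide
  add_assoc' := by decide
  add_idem' := by decide
  mul_assoc' := by decide
  left_distrib' := by decide
  right_distrib' := by decide

-- The valuation `val_{p,A}` associated with a maximal antichain `A` of
-- `(R(p), →_p|R(p))`.
open Classical in
noncomputable def valPA.{u, v} {X : Type v} (p : SrPoly X) (A : Set X) : X → B0 := fun x =>
  if x ∈ A then B0.e12
  else if ∃ y ∈ A, arrow.{u, v} p x y then B0.e11
  else B0.e22

section Aux

lemma B0.op_zero_absorb_left (op : B0 → B0 → B0)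
    (hz : ∀ b, op B0.zero b = B0.zero) :
    ∀ l : List B0, l.foldl op B0.zero = B0.zero := by
  intro l
  induction l with
  | nil => rfl
  | cons b t ih => simpa [List.foldl_cons, hz] using ih

lemma B0.op_all_e11 (op : B0 → B0 → B0) (he : op B0.e11 B0.e11 = B0.e11) :
    ∀ l : List B0, (∀ b ∈ l, b = B0.e11) → l.foldl op B0.e11 = B0.e11 := by
  intro l
  induction l with
  | nil => intro _; rfl
  | cons b t ih =>
    intro hall
    have hb : b = B0.e11 := hall b (by simp)
    subst hb
    rw [List.foldl_cons, he]
    exact ih fun c hc => hall c (by simp [hc])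

lemma B0.op_hit_zero (op : B0 → B0 → B0)
    (hz : ∀ b, op B0.zero b = B0.zero) (hz2 : ∀ a, op a B0.zero = B0.zero)
    (he : op B0.e11 B0.e11 = B0.e11) :
    ∀ (l : List B0) (a : B0), B0.zero ∈ l → (∀ b ∈ l, b = B0.e11 ∨ b = B0.zero) →
      (a = B0.e11 ∨ a = B0.zero) → l.foldl op a = B0.zero := by
  intro l
  induction l with
  | nil => intro a h; simp at h
  | cons b t ih =>
    intro a hmem hall ha
    rcases ha with ha | ha
    · subst ha
      rcases hall b (by simp) with hb | hb
      · subst hb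
        rw [List.foldl_cons, he]
        have : B0.zero ∈ t := by
          rcases List.mem_cons.mp hmem with h | h
          · exact absurd h.symm (by decide)
          · exact h
        exact ih B0.e11 this (fun c hc => hall c (by simp [hc])) (Or.inl rfl)
      · subst hb
        rw [List.foldl_cons, hz2]
        exact B0.op_zero_absorb_left op hz t
    · subst ha
      rw [List.foldl_cons, hz]
      exact B0.op_zero_absorb_left op hz t

lemma B0.zero_mul' : ∀ b : B0, B0.zero * b = B0.zero := by decide
lemma B0.mul_zero' : ∀ a : B0, a * B0.zero = B0.zero := by decide
lemma B0.e11_mul : B0.e11 * B0.e11 = B0.e11 := by decide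
lemma B0.zero_add' : ∀ b : B0, B0.zero + b = B0.zero := by decide
lemma B0.add_zero' : ∀ a : B0, a + B0.zero = B0.zero := by decide
lemma B0.e11_add : B0.e11 + B0.e11 = B0.e11 := by decide

open Classical in
/-- With the valuation sending `x ↦ 0` and everything else to `e11`,
a word evaluates to `0` if it contains `x` and to `e11` otherwise. -/
lemma word_eval_char {X : Type v} (x : X) (w : Word X) :
    Word.eval (fun y => if y = x then B0.zero else B0.e11) w =
      (if x ∈ Word.letters w then B0.zero else B0.e11) := by
  classical
  set val : X → B0 := fun y => if y = x then B0.zero else B0.e11 with hval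
  have hvals : ∀ y, val y = B0.e11 ∨ val y = B0.zero := by
    intro y; by_cases h : y = x <;> simp [hval, h]
  by_cases hx : x ∈ Word.letters w
  · rw [if_pos hx]
    unfold Word.eval
    rcases List.mem_cons.mp hx with h1 | h2
    · have : val w.1 = B0.zero := by simp [hval, h1.symm]
      rw [this]
      exact B0.op_zero_absorb_left _ B0.zero_mul' _
    · have hz : B0.zero ∈ w.2.map val := by
        refine List.mem_map.mpr ⟨x, h2, ?_⟩
        simp [hval]
      refine B0.op_hit_zero _ B0.zero_mul' B0.mul_zero' B0.e11_mul _ _ hz ?_ (hvals w.1)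
      intro b hb
      rcases List.mem_map.mp hb with ⟨y, _, rfl⟩
      exact hvals y
  · rw [if_neg hx]
    unfold Word.eval
    have h1 : val w.1 = B0.e11 := by
      have : w.1 ≠ x := fun h => hx (by simp [Word.letters, h])
      simp [hval, this]
    rw [h1]
    refine B0.op_all_e11 _ B0.e11_mul _ ?_
    intro b hb
    rcases List.mem_map.mp hb with ⟨y, hy, rfl⟩
    have : y ≠ x := fun h => hx (by subst h; simp [Word.letters, hy])
    simp [hval, this]

open Classical in
lemma poly_eval_char {X : Type v} (x : X) (p : SrPoly X) :
    SrPoly.eval (fun y => if y = x then B0.zero else B0.e11) p =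
      (if x ∈ SrPoly.content p then B0.zero else B0.e11) := by
  classical
  set val : X → B0 := fun y => if y = x then B0.zero else B0.e11 with hval
  by_cases hx : x ∈ SrPoly.content p
  · rw [if_pos hx]
    obtain ⟨w, hw, hxw⟩ := hx
    unfold SrPoly.eval
    rcases List.mem_cons.mp hw with h1 | h2
    · have : Word.eval val p.1 = B0.zero := by
        rw [hval, word_eval_char, if_pos (h1 ▸ hxw)]
      rw [this]
      exact B0.op_zero_absorb_left _ B0.zero_add' _
    · have hz : B0.zero ∈ p.2.map (Word.eval val) := by
        refine List.mem_map.mpr ⟨w, h2, ?_⟩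
        rw [hval, word_eval_char, if_pos hxw]
      refine B0.op_hit_zero _ B0.zero_add' B0.add_zero' B0.e11_add _ _ hz ?_ ?_
      · intro b hb
        rcases List.mem_map.mp hb with ⟨u, _, rfl⟩
        rw [hval, word_eval_char]
        by_cases h : x ∈ Word.letters u <;> simp [h]
      · rw [hval, word_eval_char]
        by_cases h : x ∈ Word.letters p.1 <;> simp [h]
  · rw [if_neg hx]
    unfold SrPoly.eval
    have hnone : ∀ w ∈ SrPoly.words p, x ∉ Word.letters w := by
      intro w hw hxw; exact hx ⟨w, hw, hxw⟩
    have h1 : Word.eval val p.1 = B0.e11 := by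
      rw [hval, word_eval_char, if_neg (hnone p.1 (by simp [SrPoly.words]))]
    rw [h1]
    refine B0.op_all_e11 _ B0.e11_add _ ?_
    intro b hb
    rcases List.mem_map.mp hb with ⟨u, hu, rfl⟩
    rw [hval, word_eval_char, if_neg (hnone u (by simp [SrPoly.words, hu]))]

lemma content_subset_of_B0 {X : Type v} (p q : SrPoly X)
    (h : ∀ val : X → B0, SrPoly.eval val p = SrPoly.eval val q) :
    SrPoly.content p ⊆ SrPoly.content q := by
  classical
  intro x hxp
  by_contra hxq
  have := h (fun y => if y = x then B0.zero else B0.e11)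
  rw [poly_eval_char, poly_eval_char, if_pos hxp, if_neg hxq] at this
  exact absurd this (by decide)

end Aux

/-- if `B0` satisfies `p ≈ q` then `c(p) = c(q)`. -/
theorem content_eq_of_B0_identity {X : Type v} (p q : SrPoly X)
    (h : ∀ val : X → B0, SrPoly.eval val p = SrPoly.eval val q) :
    SrPoly.content p = SrPoly.content q := by
  exact Set.Subset.antisymm (content_subset_of_B0 p q h)
    (content_subset_of_B0 q p fun val => (h val).symm)
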